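/- Let K be a σ-henselian valued difference field satisfying Axiom 4, and let (G, a) be in σ-hensel configuration, where G is a σ-polynomial over K and a ∈ K. Then there is b ∈ K such that G(b) = 0 and v(a − b) = γ(G, a). -/

import Mathlib

/-!
Common definitions: three-sorted valued (difference) fields, σ-polynomials,
pc-sequences, axioms from the paper.
-/

namespace VDFPaper

universe u v w

/-- A valued field, presented as a three-sorted structure `(K, Γ, k; v, π)`.
The valuation is extended to `v : K → WithTop Γ` with `v 0 = ⊤`, and the residue
map `π : O → k` is extended to all of `K` by `0` outside the valuation ring. -/
structure ValuedField (K : Type u) (Γ : Type v) (k : Type w)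
    [Field K] [AddCommGroup Γ] [LinearOrder Γ] [IsOrderedAddMonoid Γ] [Field k] where
  v : K → WithTop Γ
  π : K → k
  v_top_iff : ∀ a : K, v a = ⊤ ↔ a = 0
  v_mul : ∀ a b : K, v (a * b) = v a + v b
  v_add : ∀ a b : K, min (v a) (v b) ≤ v (a + b)
  v_surj : ∀ γ : Γ, ∃ a : K, v a = (γ : WithTop Γ)
  π_add : ∀ a b : K, 0 ≤ v a → 0 ≤ v b → π (a + b) = π a + π b
  π_mul : ∀ a b : K, 0 ≤ v a → 0 ≤ v b → π (a * b) = π a * π b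
  π_one : π 1 = 1
  π_surj : Function.Surjective π
  π_eq_zero_iff : ∀ a : K, 0 ≤ v a → (π a = 0 ↔ 0 < v a)
  π_junk : ∀ a : K, ¬ 0 ≤ v a → π a = 0

/-- A valued difference field (satisfying Axiom 1: `v (σ a) = v a`);
`σr` is the induced automorphism of the residue field. -/
structure ValuedDiffField (K : Type u) (Γ : Type v) (k : Type w)
    [Field K] [AddCommGroup Γ] [LinearOrder Γ] [IsOrderedAddMonoid Γ] [Field k]
    extends ValuedField K Γ k where
  σ : K ≃+* K
  σr : k ≃+* k
  v_σ : ∀ a : K, v (σ a) = v a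
  π_σ : ∀ a : K, π (σ a) = σr (π a)

/-- `iterEquiv s m` is the `m`-th iterate (`m : ℤ`) of the automorphism `s`. -/
def iterEquiv {R : Type*} [Mul R] [Add R] (s : R ≃+* R) : ℤ → R → R
  | Int.ofNat m => (⇑s)^[m]
  | Int.negSucc m => (⇑s.symm)^[m + 1]

/-- Evaluation of the σ-polynomial `f(x, σ x, …, σⁿ x)` at `a`. -/
noncomputable def evalDiff {R : Type*} [CommSemiring R] (s : R → R) {n : ℕ}
    (f : MvPolynomial (Fin (n + 1)) R) (a : R) : R :=
  MvPolynomial.eval (fun i : Fin (n + 1) => s^[(i : ℕ)] a) f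

/-- The Taylor coefficient `f_(i)` (Hasse derivative), characterized by
`f(x+y) = Σ_i f_(i)(x) · y^i`. -/
noncomputable def taylorCoeff {R : Type*} [CommRing R] {n : ℕ}
    (i : Fin (n + 1) →₀ ℕ) (f : MvPolynomial (Fin (n + 1)) R) :
    MvPolynomial (Fin (n + 1)) R :=
  ∑ d ∈ f.support,
    MvPolynomial.monomial (d - i)
      ((∏ j ∈ d.support ∪ i.support, ((d j).choose (i j) : R)) * f.coeff d)

/-- Apply a (not necessarily ring-hom) map to all coefficients; used for
reduction of σ-polynomials over the valuation ring to the residue field. -/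
noncomputable def mapCoeffs {R S : Type*} [CommSemiring R] [CommSemiring S]
    (π : R → S) {n : ℕ} (f : MvPolynomial (Fin (n + 1)) R) :
    MvPolynomial (Fin (n + 1)) S :=
  ∑ d ∈ f.support, MvPolynomial.monomial d (π (f.coeff d))

/-- `|j| = j₀ + ⋯ + jₙ` for a multi-index. -/
def degSum {n : ℕ} (j : Fin (n + 1) →₀ ℕ) : ℕ := j.sum fun _ e => e

/-- The order of a σ-polynomial: the largest `i` such that `σ^i x` occurs. -/
def sigmaOrder {R : Type*} [CommSemiring R] {n : ℕ}
    (f : MvPolynomial (Fin (n + 1)) R) : ℕ :=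
  f.support.sup fun d => d.support.sup fun j => (j : ℕ)

lemma sigmaOrder_le {R : Type*} [CommSemiring R] {n : ℕ}
    (f : MvPolynomial (Fin (n + 1)) R) : sigmaOrder f ≤ n :=
  Finset.sup_le fun d _ => Finset.sup_le fun j _ => Nat.lt_succ_iff.mp j.isLt

/-- Complexity of a σ-polynomial: `(order + 1, degree in σ^order x, total degree)`
for nonconstant ones, `(0,0,0)` for constants (so constants are of lower
complexity than all nonconstant σ-polynomials, as in the paper). -/
noncomputable def sigmaComplexity {R : Type*} [CommSemiring R] {n : ℕ}
    (f : MvPolynomial (Fin (n + 1)) R) : ℕ × ℕ × ℕ :=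
  if f.totalDegree = 0 then (0, 0, 0)
  else (sigmaOrder f + 1,
    MvPolynomial.degreeOf (⟨sigmaOrder f, Nat.lt_succ_of_le (sigmaOrder_le f)⟩ : Fin (n + 1)) f,
    f.totalDegree)

/-- Lexicographic order on complexities. -/
def TripleLT (a b : ℕ × ℕ × ℕ) : Prop :=
  a.1 < b.1 ∨ (a.1 = b.1 ∧ (a.2.1 < b.2.1 ∨ (a.2.1 = b.2.1 ∧ a.2.2 < b.2.2)))

/-- `α` is σ-transcendental over the difference subfield given by `φ : E →+* F`,
where `s` is the difference operator of `F`. -/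
def SigmaTranscendentalOver {E F : Type*} [Field E] [Field F]
    (φ : E →+* F) (s : F → F) (α : F) : Prop :=
  ∀ (n : ℕ) (f : MvPolynomial (Fin (n + 1)) E), f ≠ 0 →
    evalDiff s (MvPolynomial.map φ f) α ≠ 0

/-- `g` is a minimal σ-polynomial of `α` over the difference subfield `φ : E →+* F`. -/
def IsMinimalSigmaPolyOver {E F : Type*} [Field E] [Field F]
    (φ : E →+* F) (s : F → F) {n : ℕ} (g : MvPolynomial (Fin (n + 1)) E) (α : F) : Prop :=
  g ≠ 0 ∧ evalDiff s (MvPolynomial.map φ g) α = 0 ∧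
    ∀ (m : ℕ) (h : MvPolynomial (Fin (m + 1)) E), h ≠ 0 →
      TripleLT (sigmaComplexity h) (sigmaComplexity g) →
      evalDiff s (MvPolynomial.map φ h) α ≠ 0

/-- The difference subfield `E⟨a⟩` generated over `S = E` by `a`:
the subfield generated by `S` together with all `σ^m a`, `m : ℤ`. -/
def genDiffSubfield {F : Type*} [Field F] (s : F ≃+* F) (S : Set F) (a : F) : Subfield F :=
  Subfield.closure (S ∪ Set.range fun m : ℤ => iterEquiv s m a)

/-- An embedding of valued fields (three-sorted). -/
structure ValEmbedding {K₁ Γ₁ k₁ K₂ Γ₂ k₂ : Type*}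
    [Field K₁] [AddCommGroup Γ₁] [LinearOrder Γ₁] [IsOrderedAddMonoid Γ₁] [Field k₁]
    [Field K₂] [AddCommGroup Γ₂] [LinearOrder Γ₂] [IsOrderedAddMonoid Γ₂] [Field k₂]
    (M₁ : ValuedField K₁ Γ₁ k₁) (M₂ : ValuedField K₂ Γ₂ k₂) where
  toField : K₁ →+* K₂
  toGroup : Γ₁ → Γ₂
  toGroup_add : ∀ x y : Γ₁, toGroup (x + y) = toGroup x + toGroup y
  toGroup_mono : StrictMono toGroup
  comm_v : ∀ a : K₁, M₂.v (toField a) = WithTop.map toGroup (M₁.v a)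
  toRes : k₁ →+* k₂
  comm_π : ∀ a : K₁, 0 ≤ M₁.v a → M₂.π (toField a) = toRes (M₁.π a)

/-- An embedding (extension) of valued difference fields. -/
structure VDFEmbedding {K₁ Γ₁ k₁ K₂ Γ₂ k₂ : Type*}
    [Field K₁] [AddCommGroup Γ₁] [LinearOrder Γ₁] [IsOrderedAddMonoid Γ₁] [Field k₁]
    [Field K₂] [AddCommGroup Γ₂] [LinearOrder Γ₂] [IsOrderedAddMonoid Γ₂] [Field k₂]
    (M₁ : ValuedDiffField K₁ Γ₁ k₁) (M₂ : ValuedDiffField K₂ Γ₂ k₂)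
    extends ValEmbedding M₁.toValuedField M₂.toValuedField where
  comm_σ : ∀ a : K₁, toField (M₁.σ a) = M₂.σ (toField a)

/-- An extension is immediate if it induces bijections on value groups and residue fields. -/
def ValEmbedding.IsImmediate {K₁ Γ₁ k₁ K₂ Γ₂ k₂ : Type*}
    [Field K₁] [AddCommGroup Γ₁] [LinearOrder Γ₁] [IsOrderedAddMonoid Γ₁] [Field k₁]
    [Field K₂] [AddCommGroup Γ₂] [LinearOrder Γ₂] [IsOrderedAddMonoid Γ₂] [Field k₂]
    {M₁ : ValuedField K₁ Γ₁ k₁} {M₂ : ValuedField K₂ Γ₂ k₂}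
    (E : ValEmbedding M₁ M₂) : Prop :=
  Function.Surjective E.toGroup ∧ Function.Surjective E.toRes

def VDFEmbedding.IsImmediate {K₁ Γ₁ k₁ K₂ Γ₂ k₂ : Type*}
    [Field K₁] [AddCommGroup Γ₁] [LinearOrder Γ₁] [IsOrderedAddMonoid Γ₁] [Field k₁]
    [Field K₂] [AddCommGroup Γ₂] [LinearOrder Γ₂] [IsOrderedAddMonoid Γ₂] [Field k₂]
    {M₁ : ValuedDiffField K₁ Γ₁ k₁} {M₂ : ValuedDiffField K₂ Γ₂ k₂}
    (E : VDFEmbedding M₁ M₂) : Prop :=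
  E.toValEmbedding.IsImmediate

section Pc

variable {K : Type u} {Γ : Type v} {k : Type w}
variable [Field K] [AddCommGroup Γ] [LinearOrder Γ] [IsOrderedAddMonoid Γ] [Field k]

/-- A pc-sequence (pseudo-Cauchy sequence). The index type is assumed to be a
nonempty well-ordered set without greatest element where this matters. -/
def IsPcSeq {I : Type*} [LinearOrder I] (v : K → WithTop Γ) (a : I → K) : Prop :=
  ∃ ρ₀ : I, ∀ ρ ρ' ρ'' : I, ρ₀ ≤ ρ → ρ < ρ' → ρ' < ρ'' →
    v (a ρ' - a ρ) < v (a ρ'' - a ρ')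

/-- `a_ρ ⤳ x` : the sequence `a` pseudoconverges to `x`, i.e. `v (x - a_ρ)` is
eventually strictly increasing. -/
def PseudoLim {I : Type*} [LinearOrder I] (v : K → WithTop Γ) (a : I → K) (x : K) : Prop :=
  ∃ ρ₀ : I, ∀ ρ ρ' : I, ρ₀ ≤ ρ → ρ < ρ' → v (x - a ρ) < v (x - a ρ')

/-- Two pc-sequences are equivalent: they have the same pseudolimits in every
valued field extension. -/
def PcEquiv (M : ValuedField K Γ k) {I : Type*} [LinearOrder I] (a b : I → K) : Prop :=
  ∀ (K' : Type u) (Γ' : Type v) (k' : Type w)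
    [Field K'] [AddCommGroup Γ'] [LinearOrder Γ'] [IsOrderedAddMonoid Γ'] [Field k']
    (M' : ValuedField K' Γ' k') (E : ValEmbedding M M') (x : K'),
    PseudoLim M'.v (fun ρ => E.toField (a ρ)) x ↔
    PseudoLim M'.v (fun ρ => E.toField (b ρ)) x

end Pc

section Axioms

variable {K : Type u} {Γ : Type v} {k : Type w}
variable [Field K] [AddCommGroup Γ] [LinearOrder Γ] [IsOrderedAddMonoid Γ] [Field k]

/-- Axiom 2: every value is the value of an element of the fixed field. -/
def Axiom2 (M : ValuedDiffField K Γ k) : Prop :=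
  ∀ γ : Γ, ∃ a : K, M.σ a = a ∧ M.v a = (γ : WithTop Γ)

/-- Axiom 3 (a scheme about the residue difference field). -/
def Axiom3 (M : ValuedDiffField K Γ k) : Prop :=
  (∀ d : ℕ, 0 < d → ∃ y : k, (⇑M.σr)^[d] y ≠ y) ∧
  (∀ p : ℕ, p.Prime → ringChar k = p →
    ∀ d : ℤ, d ≠ 0 → ∀ e : ℕ, 0 < e → ∃ y : k, iterEquiv M.σr d y ≠ y ^ p ^ e)

/-- Axiom 4ₙ: solvability in the residue field of inhomogeneous linear
σ̄-equations of order ≤ n. -/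
def Axiom4n (M : ValuedDiffField K Γ k) (n : ℕ) : Prop :=
  ∀ α : Fin (n + 1) → k, (∃ i, α i ≠ 0) →
    ∃ y : k, 1 + ∑ i : Fin (n + 1), α i * (⇑M.σr)^[(i : ℕ)] y = 0

def Axiom4 (M : ValuedDiffField K Γ k) : Prop := ∀ n : ℕ, Axiom4n M n

/-- The Witt case for the prime `p`. -/
def WittCase (M : ValuedDiffField K Γ k) (p : ℕ) : Prop :=
  p.Prime ∧ ringChar K = 0 ∧ ringChar k = p ∧ PerfectField k ∧
  (∃ e : Γ, 0 < e ∧ (∀ γ : Γ, 0 < γ → e ≤ γ) ∧ M.v (p : K) = (e : WithTop Γ)) ∧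
  ∀ y : k, M.σr y = y ^ p

/-- Finitely ramified valued (difference) field. -/
def FinitelyRamified (M : ValuedDiffField K Γ k) : Prop :=
  ringChar K = 0 ∧ ∀ p : ℕ, p.Prime → ringChar k = p →
    {γ : Γ | 0 < γ ∧ (γ : WithTop Γ) < M.v (p : K)}.Finite

/-- Workable: Axioms 2 and 3, or Axiom 2 and a Witt case with infinite residue field. -/
def Workable (M : ValuedDiffField K Γ k) : Prop :=
  (Axiom2 M ∧ Axiom3 M) ∨ (Axiom2 M ∧ ∃ p : ℕ, WittCase M p ∧ Infinite k)

/-- All coefficients lie in the valuation ring. -/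
def CoeffsInO (M : ValuedField K Γ k) {n : ℕ} (f : MvPolynomial (Fin (n + 1)) K) : Prop :=
  ∀ d : Fin (n + 1) →₀ ℕ, 0 ≤ M.v (f.coeff d)

/-- `min_{|i| = 1} v (G_(i) (a))`. -/
noncomputable def vG1min (M : ValuedDiffField K Γ k) {n : ℕ}
    (f : MvPolynomial (Fin (n + 1)) K) (a : K) : WithTop Γ :=
  Finset.univ.inf fun i : Fin (n + 1) =>
    M.v (evalDiff (⇑M.σ) (taylorCoeff (Finsupp.single i 1) f) a)

/-- `G` is σ-henselian at `a` (with `G` over `O` and `a ∈ O`). -/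
def SigmaHenselAt (M : ValuedDiffField K Γ k) {n : ℕ}
    (f : MvPolynomial (Fin (n + 1)) K) (a : K) : Prop :=
  0 < M.v (evalDiff (⇑M.σ) f a) ∧ vG1min M f a = 0

/-- `K` is σ-henselian. -/
def SigmaHenselian (M : ValuedDiffField K Γ k) : Prop :=
  ∀ (n : ℕ) (f : MvPolynomial (Fin (n + 1)) K), CoeffsInO M.toValuedField f →
    ∀ a : K, 0 ≤ M.v a → SigmaHenselAt M f a →
      ∃ b : K, evalDiff (⇑M.σ) f b = 0 ∧ M.v (evalDiff (⇑M.σ) f a) ≤ M.v (a - b)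

/-- `(G, a)` is in σ-hensel configuration. -/
def HenselConfig (M : ValuedDiffField K Γ k) {n : ℕ}
    (f : MvPolynomial (Fin (n + 1)) K) (a : K) : Prop :=
  (∃ i : Fin (n + 1), evalDiff (⇑M.σ) (taylorCoeff (Finsupp.single i 1) f) a ≠ 0) ∧
  (evalDiff (⇑M.σ) f a = 0 ∨ ∃ γ : Γ,
    M.v (evalDiff (⇑M.σ) f a) = vG1min M f a + (γ : WithTop Γ) ∧
    ∀ j : Fin (n + 1) →₀ ℕ, 1 < degSum j →
      M.v (evalDiff (⇑M.σ) f a) <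
        M.v (evalDiff (⇑M.σ) (taylorCoeff j f) a) + degSum j • (γ : WithTop Γ))

/-- The pc-sequence `a` is of σ-algebraic type over `K`. -/
def OfSigmaAlgebraicType (M : ValuedDiffField K Γ k) {I : Type*} [LinearOrder I]
    (a : I → K) : Prop :=
  ∃ (n : ℕ) (G : MvPolynomial (Fin (n + 1)) K) (b : I → K),
    IsPcSeq M.v b ∧ PcEquiv M.toValuedField a b ∧
    PseudoLim M.v (fun ρ => evalDiff (⇑M.σ) G (b ρ)) 0

/-- The pc-sequence `a` is of σ-transcendental type over `K`. -/
def OfSigmaTranscendentalType (M : ValuedDiffField K Γ k) {I : Type*} [LinearOrder I]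
    (a : I → K) : Prop :=
  ∀ (n : ℕ) (G : MvPolynomial (Fin (n + 1)) K) (b : I → K),
    IsPcSeq M.v b → PcEquiv M.toValuedField a b →
    ¬ PseudoLim M.v (fun ρ => evalDiff (⇑M.σ) G (b ρ)) 0

/-- `G` is a minimal σ-polynomial of the pc-sequence `a` over `K`. -/
def IsMinPolyOfPcSeq (M : ValuedDiffField K Γ k) {I : Type*} [LinearOrder I]
    (a : I → K) {n : ℕ} (G : MvPolynomial (Fin (n + 1)) K) : Prop :=
  (∃ b : I → K, IsPcSeq M.v b ∧ PcEquiv M.toValuedField a b ∧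
    PseudoLim M.v (fun ρ => evalDiff (⇑M.σ) G (b ρ)) 0) ∧
  ∀ (m : ℕ) (H : MvPolynomial (Fin (m + 1)) K),
    TripleLT (sigmaComplexity H) (sigmaComplexity G) →
    ∀ b : I → K, IsPcSeq M.v b → PcEquiv M.toValuedField a b →
      ¬ PseudoLim M.v (fun ρ => evalDiff (⇑M.σ) H (b ρ)) 0

end Axioms

/-- A bundled extension of a valued field (with prescribed value-group and
residue sorts). -/
structure ValuedFieldExt {K : Type u} {Γ : Type v} {k : Type w}
    [Field K] [AddCommGroup Γ] [LinearOrder Γ] [IsOrderedAddMonoid Γ] [Field k]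
    (M : ValuedField K Γ k) (Γ' : Type v) (k' : Type w)
    [AddCommGroup Γ'] [LinearOrder Γ'] [IsOrderedAddMonoid Γ'] [Field k'] where
  carrier : Type u
  [fieldInst : Field carrier]
  str : ValuedField carrier Γ' k'
  emb : ValEmbedding M str

attribute [instance] ValuedFieldExt.fieldInst

/-- A bundled extension of a valued difference field. -/
structure VDFExt {K : Type u} {Γ : Type v} {k : Type w}
    [Field K] [AddCommGroup Γ] [LinearOrder Γ] [IsOrderedAddMonoid Γ] [Field k]
    (M : ValuedDiffField K Γ k) (Γ' : Type v) (k' : Type w)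
    [AddCommGroup Γ'] [LinearOrder Γ'] [IsOrderedAddMonoid Γ'] [Field k'] where
  carrier : Type u
  [fieldInst : Field carrier]
  str : ValuedDiffField carrier Γ' k'
  emb : VDFEmbedding M str

attribute [instance] VDFExt.fieldInst

section Max

variable {K : Type u} {Γ : Type v} {k : Type w}
variable [Field K] [AddCommGroup Γ] [LinearOrder Γ] [IsOrderedAddMonoid Γ] [Field k]

/-- Maximal valued field: no proper immediate valued field extension. -/
def MaximalValuedField (M : ValuedField K Γ k) : Prop :=
  ¬ ∃ Ext : ValuedFieldExt M Γ k,
      Ext.emb.IsImmediate ∧ ¬ Function.Surjective Ext.emb.toField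

/-- Maximal valued difference field: no proper immediate extension. -/
def MaximalVDF (M : ValuedDiffField K Γ k) : Prop :=
  ¬ ∃ Ext : VDFExt M Γ k,
      Ext.emb.IsImmediate ∧ ¬ Function.Surjective Ext.emb.toField

/-- Every element of the extension is σ-algebraic over the ground field. -/
def SigmaAlgebraicExt {Γ' : Type v} {k' : Type w}
    [AddCommGroup Γ'] [LinearOrder Γ'] [IsOrderedAddMonoid Γ'] [Field k']
    {M : ValuedDiffField K Γ k} (Ext : VDFExt M Γ' k') : Prop :=
  ∀ x : Ext.carrier, ∃ (n : ℕ) (f : MvPolynomial (Fin (n + 1)) K), f ≠ 0 ∧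
    evalDiff (⇑Ext.str.σ) (MvPolynomial.map Ext.emb.toField f) x = 0

/-- σ-algebraically maximal: no proper immediate σ-algebraic extension. -/
def SigmaAlgMaximal (M : ValuedDiffField K Γ k) : Prop :=
  ¬ ∃ Ext : VDFExt M Γ k,
      Ext.emb.IsImmediate ∧ SigmaAlgebraicExt Ext ∧
      ¬ Function.Surjective Ext.emb.toField

/-- Complete with a discrete valuation. -/
def CompleteDiscrete (M : ValuedField K Γ k) : Prop :=
  (∃ e : Γ ≃o ℤ, ∀ x y : Γ, e (x + y) = e x + e y) ∧
  ∀ u : ℕ → K,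
    (∀ γ : Γ, ∃ N : ℕ, ∀ m n : ℕ, N ≤ m → N ≤ n → m ≠ n →
      (γ : WithTop Γ) < M.v (u m - u n)) →
    ∃ x : K, ∀ γ : Γ, ∃ N : ℕ, ∀ n : ℕ, N ≤ n → (γ : WithTop Γ) < M.v (x - u n)

end Max

/-- `g` is an isomorphism of difference fields `A → A'` over `E`
(via `φ : E → F`, `φ' : E → F'`) sending `a` to `b`; `s, s'` are the difference
operators of the ambient fields. -/
def IsDiffIsoOver {E F F' : Type*} [Field E] [Field F] [Field F']
    (φ : E →+* F) (φ' : E →+* F') (s : F → F) (s' : F' → F')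
    (A : Subfield F) (A' : Subfield F') (a : F) (b : F') (g : A →+* F') : Prop :=
  (Set.range fun x : A => g x) = (A' : Set F') ∧
  (∀ (e : E) (he : φ e ∈ A), g ⟨φ e, he⟩ = φ' e) ∧
  (∀ ha : a ∈ A, g ⟨a, ha⟩ = b) ∧
  (∀ (x : A) (hx : s (x : F) ∈ A), g ⟨s (x : F), hx⟩ = s' (g x))

/-- As `IsDiffIsoOver`, and moreover valuation-preserving. -/
def IsValDiffIsoOver {E F F' : Type*} {Γ Γ' : Type*} [Field E] [Field F] [Field F']
    [AddCommGroup Γ] [LinearOrder Γ] [IsOrderedAddMonoid Γ] [AddCommGroup Γ'] [LinearOrder Γ'] [IsOrderedAddMonoid Γ']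
    (v : F → WithTop Γ) (v' : F' → WithTop Γ')
    (φ : E →+* F) (φ' : E →+* F') (s : F → F) (s' : F' → F')
    (A : Subfield F) (A' : Subfield F') (a : F) (b : F') (g : A →+* F') : Prop :=
  IsDiffIsoOver φ φ' s s' A A' a b g ∧
  ∀ x y : A, v (x : F) ≤ v (y : F) ↔ v' (g x) ≤ v' (g y)

/-- The `D`-transform substitution: `F(x₀,…,xₙ) ↦ F(W₀(y), …, Wₙ(y))` where
`W_j(y) = y₀^{p^j} + p y₁^{p^{j-1}} + ⋯ + p^j y_j`. -/
noncomputable def Dtransform (p : ℕ) {R : Type*} [CommSemiring R] {n : ℕ}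
    (F : MvPolynomial (Fin (n + 1)) R) : MvPolynomial (Fin (n + 1)) R :=
  MvPolynomial.bind₁ (fun j : Fin (n + 1) =>
    ∑ i : Fin (n + 1), if (i : ℕ) ≤ (j : ℕ) then
      MvPolynomial.C ((p : R) ^ (i : ℕ)) * MvPolynomial.X i ^ p ^ ((j : ℕ) - (i : ℕ))
    else 0) F

/-- The initial segment of the ordinals below `lam`, used as a well-ordered
index set. -/
abbrev OrdSeg (lam : Ordinal.{0}) : Type 1 := {o : Ordinal.{0} // o < lam}


/-! ### Auxiliary lemmas for Lemma 5.10 -/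

section Aux
variable {K : Type u} {Γ : Type v} {k : Type w}
variable [Field K] [AddCommGroup Γ] [LinearOrder Γ] [IsOrderedAddMonoid Γ] [Field k]

lemma v_zero (M : ValuedField K Γ k) : M.v 0 = ⊤ := (M.v_top_iff 0).2 rfl

lemma v_one (M : ValuedField K Γ k) : M.v 1 = 0 := by
  have h := M.v_mul 1 1
  rw [mul_one] at h
  have hne : M.v 1 ≠ ⊤ := fun hh => one_ne_zero ((M.v_top_iff 1).1 hh)
  lift M.v 1 to Γ using hne with g
  have hg : g = g + g := by exact_mod_cast h
  have : g = 0 := left_eq_add.mp hg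
  exact_mod_cast congrArg (fun x : Γ => (x : WithTop Γ)) this

lemma v_natCast (M : ValuedField K Γ k) (m : ℕ) : 0 ≤ M.v (m : K) := by
  induction m with
  | zero => simp [v_zero]
  | succ p ih =>
    push_cast
    refine le_trans ?_ (M.v_add _ 1)
    rw [v_one]
    exact le_min ih le_rfl

lemma v_neg1 (M : ValuedField K Γ k) : M.v (-1) = 0 := by
  have h := M.v_mul (-1) (-1)
  rw [neg_mul_neg, one_mul, v_one] at h
  have hne : M.v (-1) ≠ ⊤ := fun hh => by
    have := (M.v_top_iff _).1 hh; norm_num at this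
  lift M.v (-1) to Γ using hne with g
  have hg : g + g = (0:Γ) := by exact_mod_cast h
  have : g = 0 := by
    rcases lt_trichotomy g 0 with hl | he | hgt
    · exact absurd hg (ne_of_lt (add_neg hl hl))
    · exact he
    · exact absurd hg (ne_of_gt (add_pos hgt hgt))
  exact_mod_cast congrArg (fun x : Γ => (x : WithTop Γ)) this

lemma v_neg (M : ValuedField K Γ k) (a : K) : M.v (-a) = M.v a := by
  have h := M.v_mul (-1) a
  rwa [neg_one_mul, v_neg1 M, zero_add] at h

lemma le_v_sum (M : ValuedField K Γ k) {ι : Type*} (s : Finset ι) (g : ι → K) (c : WithTop Γ)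
    (h : ∀ i ∈ s, c ≤ M.v (g i)) : c ≤ M.v (∑ i ∈ s, g i) := by
  induction s using Finset.cons_induction with
  | empty => simp [v_zero]
  | cons i s his ih =>
    rw [Finset.sum_cons]
    exact le_trans (le_min (h i (Finset.mem_cons_self i s))
      (ih fun j hj => h j (Finset.mem_cons_of_mem hj))) (M.v_add _ _)

lemma le_v_prod (M : ValuedField K Γ k) {ι : Type*} (s : Finset ι) (g : ι → K)
    (h : ∀ i ∈ s, 0 ≤ M.v (g i)) : 0 ≤ M.v (∏ i ∈ s, g i) := by
  induction s using Finset.cons_induction with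
  | empty => simp [v_one]
  | cons i s his ih =>
    rw [Finset.prod_cons, M.v_mul]
    exact add_nonneg (h i (Finset.mem_cons_self i s))
      (ih fun j hj => h j (Finset.mem_cons_of_mem hj))

lemma v_pow_nonneg (M : ValuedField K Γ k) (a : K) (h : 0 ≤ M.v a) (m : ℕ) :
    0 ≤ M.v (a ^ m) := by
  induction m with
  | zero => simp [v_one]
  | succ p ih => rw [pow_succ, M.v_mul]; exact add_nonneg ih h

lemma π_zero (M : ValuedField K Γ k) : M.π 0 = 0 := by
  have h := M.π_add 0 0 (by simp [v_zero]) (by simp [v_zero])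
  rw [add_zero] at h
  exact left_eq_add.mp h

lemma π_natCast (M : ValuedField K Γ k) (m : ℕ) : M.π (m : K) = (m : k) := by
  induction m with
  | zero => simpa using π_zero M
  | succ p ih =>
    push_cast
    rw [M.π_add _ 1 (v_natCast M p) (le_of_eq (v_one M).symm), ih, M.π_one]

lemma π_sum (M : ValuedField K Γ k) {ι : Type*} (s : Finset ι) (g : ι → K)
    (h : ∀ i ∈ s, 0 ≤ M.v (g i)) :
    M.π (∑ i ∈ s, g i) = ∑ i ∈ s, M.π (g i) := by
  induction s using Finset.cons_induction with
  | empty => simpa using π_zero M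
  | cons i s his ih =>
    rw [Finset.sum_cons, Finset.sum_cons,
      M.π_add _ _ (h i (Finset.mem_cons_self i s))
        (le_v_sum M s g 0 fun j hj => h j (Finset.mem_cons_of_mem hj)),
      ih fun j hj => h j (Finset.mem_cons_of_mem hj)]

lemma π_prod (M : ValuedField K Γ k) {ι : Type*} (s : Finset ι) (g : ι → K)
    (h : ∀ i ∈ s, 0 ≤ M.v (g i)) :
    M.π (∏ i ∈ s, g i) = ∏ i ∈ s, M.π (g i) := by
  induction s using Finset.cons_induction with
  | empty => simpa using M.π_one
  | cons i s his ih =>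
    rw [Finset.prod_cons, Finset.prod_cons,
      M.π_mul _ _ (h i (Finset.mem_cons_self i s))
        (le_v_prod M s g fun j hj => h j (Finset.mem_cons_of_mem hj)),
      ih fun j hj => h j (Finset.mem_cons_of_mem hj)]

lemma π_pow (M : ValuedField K Γ k) (a : K) (h : 0 ≤ M.v a) (m : ℕ) :
    M.π (a ^ m) = M.π a ^ m := by
  induction m with
  | zero => simpa using M.π_one
  | succ p ih =>
    rw [pow_succ, pow_succ, M.π_mul _ _ (v_pow_nonneg M a h p) h, ih]

lemma v_σ_iter (M : ValuedDiffField K Γ k) (a : K) (m : ℕ) :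
    M.v ((⇑M.σ)^[m] a) = M.v a := by
  induction m with
  | zero => rfl
  | succ p ih => rw [Function.iterate_succ_apply', M.v_σ, ih]

lemma π_σ_iter (M : ValuedDiffField K Γ k) (a : K) (m : ℕ) :
    M.π ((⇑M.σ)^[m] a) = (⇑M.σr)^[m] (M.π a) := by
  induction m with
  | zero => rfl
  | succ p ih => rw [Function.iterate_succ_apply', Function.iterate_succ_apply', M.π_σ, ih]

lemma σ_iter_add (M : ValuedDiffField K Γ k) (a b : K) (m : ℕ) :
    (⇑M.σ)^[m] (a + b) = (⇑M.σ)^[m] a + (⇑M.σ)^[m] b := by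
  induction m with
  | zero => rfl
  | succ p ih => rw [Function.iterate_succ_apply', Function.iterate_succ_apply',
      Function.iterate_succ_apply', ih, map_add]

lemma σ_iter_mul (M : ValuedDiffField K Γ k) (a b : K) (m : ℕ) :
    (⇑M.σ)^[m] (a * b) = (⇑M.σ)^[m] a * (⇑M.σ)^[m] b := by
  induction m with
  | zero => rfl
  | succ p ih => rw [Function.iterate_succ_apply', Function.iterate_succ_apply',
      Function.iterate_succ_apply', ih, map_mul]

end Aux

section Taylor
variable {R : Type*} [CommRing R] {n : ℕ}

lemma choose_prod_univ (d j : Fin (n + 1) →₀ ℕ) :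
    (∏ i ∈ d.support ∪ j.support, ((d i).choose (j i) : R)) =
      ∏ i : Fin (n + 1), ((d i).choose (j i) : R) := by
  refine Finset.prod_subset (Finset.subset_univ _) ?_
  intro i _ hi
  simp only [Finset.mem_union, Finsupp.mem_support_iff, not_or, not_not] at hi
  rw [hi.1, hi.2]
  simp

lemma taylorCoeff_zero (f : MvPolynomial (Fin (n + 1)) R) : taylorCoeff 0 f = f := by
  unfold taylorCoeff
  have : ∀ d ∈ f.support, (MvPolynomial.monomial (d - 0))
      ((∏ j ∈ d.support ∪ (0 : Fin (n + 1) →₀ ℕ).support, ((d j).choose ((0 : Fin (n+1) →₀ ℕ) j) : R)) * f.coeff d)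
      = MvPolynomial.monomial d (f.coeff d) := by
    intro d _
    simp
  rw [Finset.sum_congr rfl this, MvPolynomial.support_sum_monomial_coeff]

lemma taylorCoeff_eq_zero (j : Fin (n + 1) →₀ ℕ) (f : MvPolynomial (Fin (n + 1)) R)
    (h : ∀ d ∈ f.support, ¬ j ≤ d) : taylorCoeff j f = 0 := by
  unfold taylorCoeff
  refine Finset.sum_eq_zero fun d hd => ?_
  obtain ⟨i, hi⟩ := not_forall.mp ((Finsupp.le_def).not.mp (h d hd))
  have hji : ¬ j i ≤ d i := hi
  have hmem : i ∈ d.support ∪ j.support := by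
    simp only [Finset.mem_union, Finsupp.mem_support_iff]
    right
    omega
  have : (∏ l ∈ d.support ∪ j.support, ((d l).choose (j l) : R)) = 0 := by
    refine Finset.prod_eq_zero hmem ?_
    rw [Nat.choose_eq_zero_of_lt (by omega)]
    simp
  rw [this, zero_mul, map_zero]

lemma prod_add_pow (x y : Fin (n + 1) → R) (d : Fin (n + 1) →₀ ℕ) :
    ∏ i : Fin (n + 1), (x i + y i) ^ d i =
      ∑ j ∈ Finset.Iic d,
        ((∏ i : Fin (n + 1), ((d i).choose (j i) : R)) *
          ∏ i : Fin (n + 1), x i ^ (d i - j i)) * ∏ i : Fin (n + 1), y i ^ j i := by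
  have step1 : ∀ i : Fin (n + 1), (x i + y i) ^ d i =
      ∑ m ∈ Finset.range (d i + 1), y i ^ m * x i ^ (d i - m) * ((d i).choose m : R) := by
    intro i
    rw [add_comm (x i) (y i), add_pow]
  calc ∏ i : Fin (n + 1), (x i + y i) ^ d i
      = ∏ i : Fin (n + 1), ∑ m ∈ Finset.range (d i + 1),
          y i ^ m * x i ^ (d i - m) * ((d i).choose m : R) := by
        exact Finset.prod_congr rfl fun i _ => step1 i
    _ = ∑ p ∈ Fintype.piFinset (fun i => Finset.range (d i + 1)),
          ∏ i : Fin (n + 1), (y i ^ p i * x i ^ (d i - p i) * ((d i).choose (p i) : R)) :=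
        Finset.prod_univ_sum _ _
    _ = _ := by
        refine Finset.sum_nbij' (fun p => Finsupp.equivFunOnFinite.symm p) (fun j => ⇑j)
          ?_ ?_ ?_ ?_ ?_
        · intro p hp
          rw [Finset.mem_Iic, Finsupp.le_def]
          intro i
          have := (Fintype.mem_piFinset.mp hp) i
          simp only [Finset.mem_range] at this
          simpa using Nat.lt_succ_iff.mp this
        · intro j hj
          rw [Finset.mem_Iic, Finsupp.le_def] at hj
          exact Fintype.mem_piFinset.mpr fun i => Finset.mem_range.mpr (Nat.lt_succ_of_le (hj i))
        · intro p _; ext i; simp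
        · intro j _; simp
        · intro p _
          rw [Finset.prod_mul_distrib, Finset.prod_mul_distrib]
          have hv : ∀ i : Fin (n+1), (Finsupp.equivFunOnFinite.symm p) i = p i := fun i => rfl
          simp only [hv]
          ring

lemma taylor_eval (f : MvPolynomial (Fin (n + 1)) R) (x y : Fin (n + 1) → R) :
    MvPolynomial.eval (fun i => x i + y i) f =
      ∑ j ∈ f.support.biUnion Finset.Iic,
        MvPolynomial.eval x (taylorCoeff j f) * ∏ i : Fin (n + 1), y i ^ j i := by
  have RHS : ∀ j : Fin (n + 1) →₀ ℕ,
      MvPolynomial.eval x (taylorCoeff j f) =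
        ∑ d ∈ f.support,
          ((∏ i ∈ d.support ∪ j.support, ((d i).choose (j i) : R)) * f.coeff d) *
            ∏ i : Fin (n + 1), x i ^ (d i - j i) := by
    intro j
    unfold taylorCoeff
    rw [map_sum]
    refine Finset.sum_congr rfl fun d _ => ?_
    rw [MvPolynomial.eval_monomial, Finsupp.prod_pow]
    simp [Finsupp.tsub_apply]
  calc MvPolynomial.eval (fun i => x i + y i) f
      = ∑ d ∈ f.support, f.coeff d * ∏ i : Fin (n + 1), (x i + y i) ^ d i := by
        rw [MvPolynomial.eval_eq']
    _ = ∑ d ∈ f.support, ∑ j ∈ Finset.Iic d,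
          f.coeff d * (((∏ i : Fin (n + 1), ((d i).choose (j i) : R)) *
            ∏ i : Fin (n + 1), x i ^ (d i - j i)) * ∏ i : Fin (n + 1), y i ^ j i) := by
        refine Finset.sum_congr rfl fun d _ => ?_
        rw [prod_add_pow, Finset.mul_sum]
    _ = ∑ d ∈ f.support, ∑ j ∈ f.support.biUnion Finset.Iic,
          f.coeff d * (((∏ i : Fin (n + 1), ((d i).choose (j i) : R)) *
            ∏ i : Fin (n + 1), x i ^ (d i - j i)) * ∏ i : Fin (n + 1), y i ^ j i) := by
        refine Finset.sum_congr rfl fun d hd => ?_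
        refine Finset.sum_subset (fun j hj => Finset.mem_biUnion.mpr ⟨d, hd, hj⟩) ?_
        intro j _ hj
        rw [Finset.mem_Iic] at hj
        obtain ⟨i, hi⟩ := not_forall.mp ((Finsupp.le_def).not.mp hj)
        have : (∏ i : Fin (n + 1), ((d i).choose (j i) : R)) = 0 := by
          refine Finset.prod_eq_zero (Finset.mem_univ i) ?_
          rw [Nat.choose_eq_zero_of_lt (by omega)]
          simp
        rw [this, zero_mul, zero_mul, mul_zero]
    _ = ∑ j ∈ f.support.biUnion Finset.Iic, ∑ d ∈ f.support,
          f.coeff d * (((∏ i : Fin (n + 1), ((d i).choose (j i) : R)) *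
            ∏ i : Fin (n + 1), x i ^ (d i - j i)) * ∏ i : Fin (n + 1), y i ^ j i) :=
        Finset.sum_comm
    _ = _ := by
        refine Finset.sum_congr rfl fun j _ => ?_
        rw [RHS j, Finset.sum_mul]
        refine Finset.sum_congr rfl fun d _ => ?_
        rw [choose_prod_univ]
        ring

end Taylor

section Aux2
variable {K : Type u} {Γ : Type v} {k : Type w}
variable [Field K] [AddCommGroup Γ] [LinearOrder Γ] [IsOrderedAddMonoid Γ] [Field k]

lemma v_pow_eq (M : ValuedField K Γ k) (x : K) (γ : Γ) (h : M.v x = (γ : WithTop Γ)) (m : ℕ) :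
    M.v (x ^ m) = ((m • γ : Γ) : WithTop Γ) := by
  induction m with
  | zero => simpa using v_one M
  | succ p ih =>
    rw [pow_succ, M.v_mul, ih, h, ← WithTop.coe_add, succ_nsmul]

lemma v_prod_eq (M : ValuedField K Γ k) {ι : Type*} (s : Finset ι) (g : ι → K) (w : ι → Γ)
    (h : ∀ i ∈ s, M.v (g i) = ((w i : Γ) : WithTop Γ)) :
    M.v (∏ i ∈ s, g i) = ((∑ i ∈ s, w i : Γ) : WithTop Γ) := by
  induction s using Finset.cons_induction with
  | empty => simpa using v_one M
  | cons i s his ih =>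
    rw [Finset.prod_cons, Finset.sum_cons, M.v_mul, h i (Finset.mem_cons_self i s),
      ih fun j hj => h j (Finset.mem_cons_of_mem hj), ← WithTop.coe_add]

lemma v_inv_add (M : ValuedField K Γ k) (x : K) (hx : x ≠ 0) :
    M.v x + M.v x⁻¹ = 0 := by
  rw [← M.v_mul, mul_inv_cancel₀ hx, v_one]

lemma v_add_eq (M : ValuedField K Γ k) (x y : K) (h : M.v x < M.v y) :
    M.v (x + y) = M.v x := by
  have h1 : M.v x ≤ M.v (x + y) := by
    refine le_trans ?_ (M.v_add x y)
    exact le_min le_rfl h.le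
  have h2 : M.v (x + y) ≤ M.v x := by
    by_contra hlt
    push_neg at hlt
    have := M.v_add (x + y) (-y)
    rw [add_neg_cancel_right] at this
    rw [v_neg] at this
    have : min (M.v (x + y)) (M.v y) ≤ M.v x := this
    rcases min_le_iff.mp this with h' | h'
    · exact absurd h' (not_le.mpr hlt)
    · exact absurd h' (not_le.mpr h)
  exact le_antisymm h2 h1

lemma degSum_eq_sum {n : ℕ} (d : Fin (n + 1) →₀ ℕ) :
    degSum d = ∑ i : Fin (n + 1), d i :=
  Finsupp.sum_fintype _ _ (fun _ => rfl)

lemma degSum_single {n : ℕ} (i : Fin (n + 1)) : degSum (Finsupp.single i 1) = 1 := by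
  rw [degSum_eq_sum]
  simp [Finsupp.single_apply]

lemma eq_zero_of_degSum {n : ℕ} (d : Fin (n + 1) →₀ ℕ) (h : degSum d = 0) : d = 0 := by
  rw [degSum_eq_sum] at h
  ext i
  exact Finset.sum_eq_zero_iff.mp h i (Finset.mem_univ i)

lemma eq_single_of_degSum {n : ℕ} (d : Fin (n + 1) →₀ ℕ) (h : degSum d = 1) :
    ∃ i, d = Finsupp.single i 1 := by
  rw [degSum_eq_sum] at h
  have hex : ∃ i, d i ≠ 0 := by
    by_contra hno
    push_neg at hno
    rw [Finset.sum_eq_zero (fun i _ => hno i)] at h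
    omega
  obtain ⟨i, hi⟩ := hex
  have key : d i + ∑ l ∈ Finset.univ.erase i, d l = 1 := by
    rw [Finset.add_sum_erase Finset.univ (fun l => d l) (Finset.mem_univ i)]
    exact h
  have hdi : d i = 1 ∧ ∑ l ∈ Finset.univ.erase i, d l = 0 := by omega
  refine ⟨i, ?_⟩
  ext l
  rcases eq_or_ne l i with rfl | hne
  · simp [hdi.1]
  · rw [Finsupp.single_apply, if_neg (fun hh : i = l => hne hh.symm)]
    exact Finset.sum_eq_zero_iff.mp hdi.2 l (Finset.mem_erase.mpr ⟨hne, Finset.mem_univ l⟩)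

variable (M : ValuedDiffField K Γ k) {n : ℕ}

lemma evalDiff_taylor (f : MvPolynomial (Fin (n + 1)) K) (a c : K) :
    evalDiff (⇑M.σ) f (a + c) =
      ∑ j ∈ f.support.biUnion Finset.Iic,
        evalDiff (⇑M.σ) (taylorCoeff j f) a *
          ∏ i : Fin (n + 1), (⇑M.σ)^[(i : ℕ)] c ^ j i := by
  unfold evalDiff
  have hpt : (fun i : Fin (n + 1) => (⇑M.σ)^[(i : ℕ)] (a + c)) =
      fun i : Fin (n + 1) => (⇑M.σ)^[(i : ℕ)] a + (⇑M.σ)^[(i : ℕ)] c := by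
    funext i
    exact σ_iter_add M a c _
  rw [hpt]
  exact taylor_eval f _ _

lemma evalDiff_sum_monomial (s : Finset (Fin (n + 1) →₀ ℕ)) (c : (Fin (n + 1) →₀ ℕ) → K)
    (w : K) :
    evalDiff (⇑M.σ) (∑ j ∈ s, MvPolynomial.monomial j (c j)) w =
      ∑ j ∈ s, c j * ∏ i : Fin (n + 1), (⇑M.σ)^[(i : ℕ)] w ^ j i := by
  unfold evalDiff
  rw [map_sum]
  exact Finset.sum_congr rfl fun j _ => by
    rw [MvPolynomial.eval_monomial, Finsupp.prod_pow]

lemma coeff_sum_monomial (s : Finset (Fin (n + 1) →₀ ℕ)) (c : (Fin (n + 1) →₀ ℕ) → K)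
    (e : Fin (n + 1) →₀ ℕ) :
    MvPolynomial.coeff e (∑ j ∈ s, MvPolynomial.monomial j (c j)) =
      if e ∈ s then c e else 0 := by
  classical
  rw [MvPolynomial.coeff_sum]
  rw [Finset.sum_congr rfl fun j _ => MvPolynomial.coeff_monomial e j (c j)]
  exact Finset.sum_ite_eq' s e c

lemma le_v_evalDiff (f : MvPolynomial (Fin (n + 1)) K)
    (hf : CoeffsInO M.toValuedField f) (u : K) (hu : 0 ≤ M.v u) :
    0 ≤ M.v (evalDiff (⇑M.σ) f u) := by
  unfold evalDiff
  rw [MvPolynomial.eval_eq']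
  refine le_v_sum _ _ _ _ fun d _ => ?_
  rw [M.v_mul]
  refine add_nonneg (hf d) (le_v_prod _ _ _ fun i _ => ?_)
  refine v_pow_nonneg _ _ ?_ _
  rw [v_σ_iter]
  exact hu

lemma taylorCoeff_coeffsInO (f : MvPolynomial (Fin (n + 1)) K)
    (hf : CoeffsInO M.toValuedField f) (j : Fin (n + 1) →₀ ℕ) :
    CoeffsInO M.toValuedField (taylorCoeff j f) := by
  intro e
  unfold taylorCoeff
  rw [MvPolynomial.coeff_sum]
  refine le_v_sum _ _ _ _ fun d _ => ?_
  rw [MvPolynomial.coeff_monomial]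
  split
  · rw [M.v_mul]
    refine add_nonneg (le_v_prod _ _ _ fun i _ => v_natCast _ _) (hf d)
  · simp [v_zero]

end Aux2
/-- Lemma 5.10 ("hensel-conf"): in a σ-henselian valued difference field with
Axiom 4, every `(G, a)` in σ-hensel configuration has a zero `b` of `G` with
`v(a - b) = γ(G, a)`, i.e. `v(a - b) + min_{|i|=1} v(G_(i)(a)) = v(G(a))`. -/
theorem stmt13 {K : Type u} {Γ : Type v} {k : Type w}
    [Field K] [AddCommGroup Γ] [LinearOrder Γ] [IsOrderedAddMonoid Γ] [Field k]
    (M : ValuedDiffField K Γ k) (h4 : Axiom4 M) (hσh : SigmaHenselian M)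
    (n : ℕ) (f : MvPolynomial (Fin (n + 1)) K) (a : K)
    (hc : HenselConfig M f a) :
    ∃ b : K, evalDiff (⇑M.σ) f b = 0 ∧
      M.v (a - b) + vG1min M f a = M.v (evalDiff (⇑M.σ) f a) := by
  classical
  by_cases hA0 : evalDiff (⇑M.σ) f a = 0
  · refine ⟨a, hA0, ?_⟩
    rw [sub_self, hA0, v_zero]
    exact top_add _
  obtain ⟨-, hcase⟩ := hc
  rcases hcase with h0 | ⟨γ, hγ1, hγ2⟩
  · exact absurd h0 hA0
  have hμne : vG1min M f a ≠ ⊤ := by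
    intro h
    rw [h, top_add] at hγ1
    exact hA0 ((M.v_top_iff _).1 hγ1)
  obtain ⟨μ, hμ⟩ := WithTop.ne_top_iff_exists.mp hμne
  set T : (Fin (n + 1) →₀ ℕ) → K :=
    fun j => evalDiff (⇑M.σ) (taylorCoeff j f) a with hTdef
  have hinf : vG1min M f a =
      Finset.univ.inf (fun i : Fin (n + 1) => M.v (T (Finsupp.single i 1))) := rfl
  obtain ⟨i0, -, hi0⟩ := Finset.exists_mem_eq_inf (Finset.univ : Finset (Fin (n + 1)))
    Finset.univ_nonempty (fun i => M.v (T (Finsupp.single i 1)))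
  have hTi0 : M.v (T (Finsupp.single i0 1)) = (μ : WithTop Γ) := by
    rw [← hi0, ← hinf, ← hμ]
  obtain ⟨d, hd⟩ := M.v_surj γ
  have hdne : d ≠ 0 := by
    intro h
    rw [h, v_zero] at hd
    exact (WithTop.coe_ne_top (a := γ)) hd.symm
  set A := evalDiff (⇑M.σ) f a with hAdef
  have hvA : M.v A = ((μ + γ : Γ) : WithTop Γ) := by
    rw [hγ1, ← hμ, WithTop.coe_add]
  have hvAinv : M.v A⁻¹ = ((-(μ + γ) : Γ) : WithTop Γ) := by
    have h1 := v_inv_add M.toValuedField A hA0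
    rw [hvA] at h1
    have h2 : M.v A⁻¹ ≠ ⊤ := by
      intro hh
      rw [hh, add_top] at h1
      exact (by simp : (⊤ : WithTop Γ) ≠ 0) h1
    obtain ⟨x, hx⟩ := WithTop.ne_top_iff_exists.mp h2
    rw [← hx, ← WithTop.coe_add] at h1
    have : μ + γ + x = 0 := by exact_mod_cast h1
    rw [← hx]
    exact_mod_cast congrArg (fun z : Γ => (z : WithTop Γ)) (neg_eq_of_add_eq_zero_right this).symm
  set δ : (Fin (n + 1) →₀ ℕ) → K :=
    fun j => ∏ i : Fin (n + 1), (⇑M.σ)^[(i : ℕ)] d ^ j i with hδdef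
  have hvδ : ∀ j, M.v (δ j) = ((degSum j • γ : Γ) : WithTop Γ) := by
    intro j
    simp only [hδdef]
    rw [v_prod_eq M.toValuedField Finset.univ _ (fun i => j i • γ)
      (fun i _ => v_pow_eq M.toValuedField _ γ (by rw [v_σ_iter]; exact hd) _)]
    rw [degSum_eq_sum, Finset.sum_smul]
  set c : (Fin (n + 1) →₀ ℕ) → K := fun j => T j * δ j * A⁻¹ with hcdef
  have hvc : ∀ j, M.v (c j) =
      M.v (T j) + ((degSum j • γ : Γ) : WithTop Γ) + ((-(μ + γ) : Γ) : WithTop Γ) := by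
    intro j
    simp only [hcdef]
    rw [M.v_mul, M.v_mul, hvδ, hvAinv]
  set J : Finset (Fin (n + 1) →₀ ℕ) := f.support.biUnion Finset.Iic with hJdef
  have hTJ : ∀ j ∉ J, T j = 0 := by
    intro j hj
    simp only [hTdef]
    have : taylorCoeff j f = 0 := by
      refine taylorCoeff_eq_zero j f fun e he hle => ?_
      exact hj (Finset.mem_biUnion.mpr ⟨e, he, Finset.mem_Iic.mpr hle⟩)
    rw [this]
    simp [evalDiff]
  have hc0 : c 0 = 1 := by
    have h1 : T 0 = A := by simp only [hTdef, hAdef, taylorCoeff_zero]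
    have h2 : δ 0 = 1 := by simp only [hδdef]; simp
    simp only [hcdef]
    rw [h1, h2, mul_one, mul_inv_cancel₀ hA0]
  have hc1 : ∀ i : Fin (n + 1), 0 ≤ M.v (c (Finsupp.single i 1)) := by
    intro i
    rw [hvc, degSum_single, one_smul]
    have h1 : (μ : WithTop Γ) ≤ M.v (T (Finsupp.single i 1)) := by
      rw [hμ, hinf]
      exact Finset.inf_le (Finset.mem_univ i)
    calc (0 : WithTop Γ) = (μ : WithTop Γ) + (γ : WithTop Γ) + ((-(μ + γ) : Γ) : WithTop Γ) := by
          rw [← WithTop.coe_add, ← WithTop.coe_add]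
          norm_cast
          abel
      _ ≤ _ := by
          exact add_le_add (add_le_add h1 le_rfl) le_rfl
  have hc2 : ∀ j, 1 < degSum j → 0 < M.v (c j) := by
    intro j hj
    have hlt := hγ2 j hj
    rw [hvA] at hlt
    have hsm : degSum j • ((γ : WithTop Γ)) = ((degSum j • γ : Γ) : WithTop Γ) := rfl
    rw [hsm] at hlt
    have step := WithTop.add_lt_add_right
      (WithTop.coe_ne_top (a := -(μ + γ))) hlt
    rw [hvc]
    calc (0 : WithTop Γ) = ((μ + γ : Γ) : WithTop Γ) + ((-(μ + γ) : Γ) : WithTop Γ) := by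
          rw [← WithTop.coe_add]
          norm_cast
          abel
      _ < _ := step
  have hcO : ∀ j, 0 ≤ M.v (c j) := by
    intro j
    rcases Nat.lt_or_ge (degSum j) 2 with h2 | h2
    · interval_cases h : degSum j
      · rw [eq_zero_of_degSum j h, hc0, v_one]
      · obtain ⟨i, rfl⟩ := eq_single_of_degSum j h
        exact hc1 i
    · exact (hc2 j h2).le
  set g : MvPolynomial (Fin (n + 1)) K :=
    ∑ j ∈ J, MvPolynomial.monomial j (c j) with hgdef
  have hgcoeff : ∀ e, MvPolynomial.coeff e g = if e ∈ J then c e else 0 := by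
    intro e
    rw [hgdef]
    exact coeff_sum_monomial J c e
  have hgO : CoeffsInO M.toValuedField g := by
    intro e
    rw [hgcoeff e]
    split
    · exact hcO e
    · simp [v_zero]
  have hkey : ∀ x : K, evalDiff (⇑M.σ) f (a + d * x) = A * evalDiff (⇑M.σ) g x := by
    intro x
    have hg1 : evalDiff (⇑M.σ) g x =
        ∑ j ∈ J, c j * ∏ i : Fin (n + 1), (⇑M.σ)^[(i : ℕ)] x ^ j i := by
      simp only [hgdef]
      exact evalDiff_sum_monomial M J c x
    rw [evalDiff_taylor M f a (d * x), ← hJdef, hg1, Finset.mul_sum]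
    refine Finset.sum_congr rfl fun j _ => ?_
    have hm : ∀ i : Fin (n + 1),
        (⇑M.σ)^[(i : ℕ)] (d * x) = (⇑M.σ)^[(i : ℕ)] d * (⇑M.σ)^[(i : ℕ)] x :=
      fun i => σ_iter_mul M d x _
    have hprod : ∏ i : Fin (n + 1), (⇑M.σ)^[(i : ℕ)] (d * x) ^ j i =
        δ j * ∏ i : Fin (n + 1), (⇑M.σ)^[(i : ℕ)] x ^ j i := by
      simp only [hδdef]
      rw [← Finset.prod_mul_distrib]
      exact Finset.prod_congr rfl fun i _ => by rw [hm i, mul_pow]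
    rw [hprod]
    simp only [hTdef, hcdef]
    field_simp
  -- Axiom 4 application
  set α : Fin (n + 1) → k := fun i => M.π (c (Finsupp.single i 1)) with hαdef
  have hvci0 : M.v (c (Finsupp.single i0 1)) = 0 := by
    rw [hvc, hTi0, degSum_single, one_smul, ← WithTop.coe_add, ← WithTop.coe_add]
    norm_cast
    abel
  have hαi0 : α i0 ≠ 0 := by
    simp only [hαdef]
    intro h
    have hlt := (M.π_eq_zero_iff _ (le_of_eq hvci0.symm)).mp h
    rw [hvci0] at hlt
    exact lt_irrefl _ hlt
  obtain ⟨y, hy⟩ := h4 n α ⟨i0, hαi0⟩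
  have hy0 : y ≠ 0 := by
    intro h
    rw [h] at hy
    have hz : ∀ i ∈ (Finset.univ : Finset (Fin (n + 1))),
        α i * (⇑M.σr)^[(i : ℕ)] (0 : k) = 0 := by
      intro i _
      rw [Function.iterate_fixed (map_zero M.σr) _, mul_zero]
    rw [Finset.sum_congr rfl hz, Finset.sum_const_zero, add_zero] at hy
    exact one_ne_zero hy
  obtain ⟨u, hu⟩ := M.π_surj y
  have hu0 : 0 ≤ M.v u := by
    by_contra h
    exact hy0 (hu ▸ M.π_junk u h)
  have hvu : M.v u = 0 := by
    refine le_antisymm ?_ hu0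
    by_contra h
    push_neg at h
    exact hy0 (hu ▸ (M.π_eq_zero_iff u hu0).mpr h)
  -- σ-henselianity
  have hgu_eq : evalDiff (⇑M.σ) g u =
      ∑ j ∈ J, c j * ∏ i : Fin (n + 1), (⇑M.σ)^[(i : ℕ)] u ^ j i := by
    simp only [hgdef]
    exact evalDiff_sum_monomial M J c u
  have hPnn : ∀ j : Fin (n + 1) →₀ ℕ,
      0 ≤ M.v (∏ i : Fin (n + 1), (⇑M.σ)^[(i : ℕ)] u ^ j i) :=
    fun j => le_v_prod _ _ _ fun i _ =>
      v_pow_nonneg _ _ (by rw [v_σ_iter]; exact hu0) _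
  have hterm_nn : ∀ j ∈ J,
      0 ≤ M.v (c j * ∏ i : Fin (n + 1), (⇑M.σ)^[(i : ℕ)] u ^ j i) := by
    intro j _
    rw [M.v_mul]
    exact add_nonneg (hcO j) (hPnn j)
  have hgu_nn : 0 ≤ M.v (evalDiff (⇑M.σ) g u) := by
    rw [hgu_eq]
    exact le_v_sum _ _ _ _ hterm_nn
  have hπP : ∀ j : Fin (n + 1) →₀ ℕ,
      M.π (∏ i : Fin (n + 1), (⇑M.σ)^[(i : ℕ)] u ^ j i) =
        ∏ i : Fin (n + 1), (⇑M.σr)^[(i : ℕ)] y ^ j i := by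
    intro j
    rw [π_prod M.toValuedField _ _ fun i _ =>
      v_pow_nonneg _ _ (by rw [v_σ_iter]; exact hu0) _]
    refine Finset.prod_congr rfl fun i _ => ?_
    rw [π_pow M.toValuedField _ (by rw [v_σ_iter]; exact hu0) _, π_σ_iter, hu]
  set F : (Fin (n + 1) →₀ ℕ) → k :=
    fun j => M.π (c j) * ∏ i : Fin (n + 1), (⇑M.σr)^[(i : ℕ)] y ^ j i with hFdef
  have hres : M.π (evalDiff (⇑M.σ) g u) = ∑ j ∈ J, F j := by
    rw [hgu_eq, π_sum M.toValuedField J _ hterm_nn]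
    refine Finset.sum_congr rfl fun j hj => ?_
    simp only [hFdef]
    rw [M.π_mul _ _ (hcO j) (hPnn j), hπP j]
  set J' : Finset (Fin (n + 1) →₀ ℕ) :=
    insert 0 (Finset.image (fun i : Fin (n + 1) => Finsupp.single i 1) Finset.univ) with hJ'def
  have hF_notJ : ∀ j ∉ J, F j = 0 := by
    intro j hj
    simp only [hFdef, hcdef]
    rw [hTJ j hj, zero_mul, zero_mul, π_zero, zero_mul]
  have hF_big : ∀ j, 1 < degSum j → F j = 0 := by
    intro j hj
    simp only [hFdef]
    rw [(M.π_eq_zero_iff _ (hcO j)).mpr (hc2 j hj), zero_mul]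
  have hsum1 : ∑ j ∈ J, F j = ∑ j ∈ J ∪ J', F j :=
    Finset.sum_subset Finset.subset_union_left fun j _ hj => hF_notJ j hj
  have hsum2 : ∑ j ∈ J ∪ J', F j = ∑ j ∈ J', F j := by
    refine (Finset.sum_subset Finset.subset_union_right fun j _ hj => ?_).symm
    rcases Nat.lt_or_ge (degSum j) 2 with h2 | h2
    · exfalso
      interval_cases h : degSum j
      · exact hj (by rw [eq_zero_of_degSum j h, hJ'def]; exact Finset.mem_insert_self _ _)
      · obtain ⟨i, hji⟩ := eq_single_of_degSum j h
        refine hj ?_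
        rw [hji, hJ'def]
        exact Finset.mem_insert_of_mem (Finset.mem_image_of_mem _ (Finset.mem_univ i))
    · exact hF_big j h2
  have h0notim : (0 : Fin (n + 1) →₀ ℕ) ∉
      Finset.image (fun i : Fin (n + 1) => Finsupp.single i 1) Finset.univ := by
    intro h
    obtain ⟨i, -, hi⟩ := Finset.mem_image.mp h
    exact one_ne_zero (Finsupp.single_eq_zero.mp hi)
  have hsum3 : ∑ j ∈ J', F j = F 0 + ∑ i : Fin (n + 1), F (Finsupp.single i 1) := by
    rw [hJ'def, Finset.sum_insert h0notim,
      Finset.sum_image fun i _ i' _ h => Finsupp.single_left_injective one_ne_zero h]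
  have hF0 : F 0 = 1 := by
    simp only [hFdef]
    rw [hc0, M.π_one]
    simp
  have hFsingle : ∀ i : Fin (n + 1),
      F (Finsupp.single i 1) = α i * (⇑M.σr)^[(i : ℕ)] y := by
    intro i
    simp only [hFdef, hαdef]
    congr 1
    rw [Finset.prod_eq_single i
      (fun l _ hl => by
        rw [Finsupp.single_apply, if_neg fun hh => hl hh.symm, pow_zero])
      (fun h => absurd (Finset.mem_univ i) h)]
    rw [Finsupp.single_eq_same, pow_one]
  have hgu_pos : 0 < M.v (evalDiff (⇑M.σ) g u) := by
    refine (M.π_eq_zero_iff _ hgu_nn).mp ?_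
    rw [hres, hsum1, hsum2, hsum3, hF0,
      Finset.sum_congr rfl fun i _ => hFsingle i]
    exact hy
  -- the minimum of values of first Taylor coefficients of g at u is 0
  set e0 : Fin (n + 1) →₀ ℕ := Finsupp.single i0 1 with he0def
  have he0J : e0 ∈ J := by
    by_contra h
    have hT0 := hTJ e0 h
    rw [hT0, v_zero] at hTi0
    exact (WithTop.coe_ne_top (a := μ)) hTi0.symm
  have hBnn : ∀ e : Fin (n + 1) →₀ ℕ,
      0 ≤ M.v (∏ l ∈ e.support ∪ e0.support, ((e l).choose (e0 l) : K)) :=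
    fun e => le_v_prod _ _ _ fun l _ => v_natCast _ _
  have hEeq : evalDiff (⇑M.σ) (taylorCoeff e0 g) u =
      ∑ e ∈ J, (∏ l ∈ e.support ∪ e0.support, ((e l).choose (e0 l) : K)) *
        MvPolynomial.coeff e g *
        ∏ l : Fin (n + 1), (⇑M.σ)^[(l : ℕ)] u ^ ((e - e0) l) := by
    have h1 : evalDiff (⇑M.σ) (taylorCoeff e0 g) u =
        ∑ e ∈ g.support, (∏ l ∈ e.support ∪ e0.support, ((e l).choose (e0 l) : K)) *
          MvPolynomial.coeff e g *
          ∏ l : Fin (n + 1), (⇑M.σ)^[(l : ℕ)] u ^ ((e - e0) l) := by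
      unfold evalDiff taylorCoeff
      rw [map_sum]
      refine Finset.sum_congr rfl fun e _ => ?_
      rw [MvPolynomial.eval_monomial, Finsupp.prod_pow]
      try ring
    rw [h1]
    refine Finset.sum_subset ?_ fun e _ he => ?_
    · intro e he
      by_contra hnot
      exact (MvPolynomial.mem_support_iff.mp he) (by rw [hgcoeff e, if_neg hnot])
    · rw [MvPolynomial.notMem_support_iff.mp he, mul_zero, zero_mul]
  have hterm2_nn : ∀ e ∈ J,
      0 ≤ M.v ((∏ l ∈ e.support ∪ e0.support, ((e l).choose (e0 l) : K)) *
        MvPolynomial.coeff e g *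
        ∏ l : Fin (n + 1), (⇑M.σ)^[(l : ℕ)] u ^ ((e - e0) l)) := by
    intro e _
    rw [M.v_mul, M.v_mul]
    exact add_nonneg (add_nonneg (hBnn e) (hgO e)) (hPnn (e - e0))
  have hπE : M.π (evalDiff (⇑M.σ) (taylorCoeff e0 g) u) = α i0 := by
    rw [hEeq, π_sum M.toValuedField J _ hterm2_nn]
    rw [Finset.sum_eq_single_of_mem e0 he0J ?_]
    · have hB : (∏ l ∈ e0.support ∪ e0.support, ((e0 l).choose (e0 l) : K)) = 1 :=
        Finset.prod_eq_one fun l _ => by rw [Nat.choose_self]; norm_num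
      have hPe0 : (∏ l : Fin (n + 1), (⇑M.σ)^[(l : ℕ)] u ^ ((e0 - e0) l)) = 1 :=
        Finset.prod_eq_one fun l _ => by simp [Finsupp.tsub_apply]
      rw [hB, one_mul, hgcoeff e0, if_pos he0J, hPe0, mul_one]
    · intro e heJ hne
      by_cases hei0 : e i0 = 0
      · have hB0 : (∏ l ∈ e.support ∪ e0.support, ((e l).choose (e0 l) : K)) = 0 := by
          refine Finset.prod_eq_zero (i := i0) ?_ ?_
          · refine Finset.mem_union_right _ ?_
            rw [he0def, Finsupp.support_single_ne_zero _ one_ne_zero]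
            exact Finset.mem_singleton_self i0
          · rw [hei0, he0def, Finsupp.single_eq_same]
            norm_num
        rw [hB0, zero_mul, zero_mul, π_zero]
      · have hds : 1 < degSum e := by
          rcases Nat.lt_or_ge (degSum e) 2 with h2 | h2
          · exfalso
            interval_cases h : degSum e
            · exact hei0 (by rw [eq_zero_of_degSum e h]; rfl)
            · obtain ⟨i, rfl⟩ := eq_single_of_degSum e h
              have hii : i = i0 := by
                by_contra hii
                exact hei0 (by rw [Finsupp.single_apply, if_neg hii])
              exact hne (by rw [hii, ← he0def])
          · exact h2
        refine (M.π_eq_zero_iff _ (hterm2_nn e heJ)).mpr ?_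
        rw [M.v_mul, M.v_mul, hgcoeff e, if_pos heJ]
        calc (0 : WithTop Γ) < M.v (c e) := hc2 e hds
          _ ≤ M.v (∏ l ∈ e.support ∪ e0.support, ((e l).choose (e0 l) : K)) + M.v (c e) :=
              le_add_of_nonneg_left (hBnn e)
          _ ≤ _ := le_add_of_nonneg_right (hPnn (e - e0))
  have hvE : M.v (evalDiff (⇑M.σ) (taylorCoeff e0 g) u) = 0 := by
    have hnn : 0 ≤ M.v (evalDiff (⇑M.σ) (taylorCoeff e0 g) u) :=
      le_v_evalDiff M _ (taylorCoeff_coeffsInO M g hgO e0) u hu0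
    refine le_antisymm ?_ hnn
    by_contra hlt
    push_neg at hlt
    exact hαi0 (by rw [← hπE]; exact (M.π_eq_zero_iff _ hnn).mpr hlt)
  have hmin : vG1min M g u = 0 := by
    have h1 : vG1min M g u ≤
        M.v (evalDiff (⇑M.σ) (taylorCoeff (Finsupp.single i0 1) g) u) :=
      Finset.inf_le (Finset.mem_univ i0)
    rw [← he0def, hvE] at h1
    exact le_antisymm h1 (Finset.le_inf fun i _ =>
      le_v_evalDiff M _ (taylorCoeff_coeffsInO M g hgO _) u hu0)
  obtain ⟨w, hw1, hw2⟩ := hσh n g hgO u hu0 ⟨hgu_pos, hmin⟩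
  have hvw : M.v w = 0 := by
    have huw : 0 < M.v (u - w) := lt_of_lt_of_le hgu_pos hw2
    have : M.v (u + (w - u)) = M.v u := by
      refine v_add_eq M.toValuedField u (w - u) ?_
      rw [hvu]
      rw [show w - u = -(u - w) by ring, v_neg]
      exact huw
    rw [show u + (w - u) = w by ring] at this
    rw [this, hvu]
  refine ⟨a + d * w, ?_, ?_⟩
  · rw [hkey w, hw1, mul_zero]
  · have h1 : a - (a + d * w) = -(d * w) := by ring
    rw [h1, v_neg, M.v_mul, hd, hvw, add_zero, ← hμ, hγ1, ← hμ]
    rw [← WithTop.coe_add, ← WithTop.coe_add]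
    norm_cast
    abel

end VDFPaper
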